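/- Let φ ∈ L²(ℝ) be refinable with V_j = D^j V₀ as above. Then the closure of ⋃_j V_j equals L²(ℝ) if and only if ⋃_{j∈ℤ} 2^j · supp(φ̂) = ℝ up to a null set, where 2^j S = {2^j θ : θ ∈ S}. -/

import Mathlib

open MeasureTheory Complex

noncomputable section Aux17sec

local notation "Hsp" => Lp ℂ 2 (volume : Measure ℝ)

namespace Aux17

/-! ### a.e. composition with affine maps -/

lemma qmp_mul {a : ℝ} (ha : a ≠ 0) :
    Measure.QuasiMeasurePreserving (fun x : ℝ => a * x) volume volume := by
  refine ⟨(measurable_const_mul a), ?_⟩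
  rw [Real.map_volume_mul_left ha]
  exact MeasureTheory.Measure.smul_absolutelyContinuous

lemma ae_comp_mul {a : ℝ} (ha : a ≠ 0) {p : ℝ → Prop} (h : ∀ᵐ x : ℝ, p x) :
    ∀ᵐ x : ℝ, p (a * x) := (qmp_mul ha).ae h

lemma ae_comp_sub (c : ℝ) {p : ℝ → Prop} (h : ∀ᵐ x : ℝ, p x) :
    ∀ᵐ x : ℝ, p (x - c) :=
  ((measurePreserving_sub_right volume c).quasiMeasurePreserving).ae h

/-! ### representation of powers of dilation-type and translation-type operators -/

lemma gen_rep_nat (E : Hsp ≃L[ℂ] Hsp) (c : ℂ) (a : ℝ) (ha : a ≠ 0)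
    (h : ∀ f : Hsp, ∀ᵐ x : ℝ, (E f : ℝ → ℂ) x = c * (f : ℝ → ℂ) (a * x)) :
    ∀ (n : ℕ) (f : Hsp), ∀ᵐ x : ℝ, ((E ^ n) f : ℝ → ℂ) x
      = c ^ n * (f : ℝ → ℂ) (a ^ n * x) := by
  intro n
  induction n with
  | zero => intro f; filter_upwards with x; simp; rfl
  | succ n ih =>
    intro f
    have h1 : (E ^ (n + 1)) f = E ((E ^ n) f) := by
      rw [pow_succ']; rfl
    have h2 := h ((E ^ n) f)
    have h3 := ae_comp_mul ha (ih f)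
    rw [h1]
    filter_upwards [h2, h3] with x hx hx'
    rw [hx, hx']
    ring_nf

lemma gen_rep_inv (E : Hsp ≃L[ℂ] Hsp) (c : ℂ) (a : ℝ) (ha : a ≠ 0) (hc : c ≠ 0)
    (h : ∀ f : Hsp, ∀ᵐ x : ℝ, (E f : ℝ → ℂ) x = c * (f : ℝ → ℂ) (a * x)) :
    ∀ f : Hsp, ∀ᵐ x : ℝ, ((E⁻¹ : Hsp ≃L[ℂ] Hsp) f : ℝ → ℂ) x
      = c⁻¹ * (f : ℝ → ℂ) (a⁻¹ * x) := by
  intro f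
  have h1 := h ((E⁻¹ : Hsp ≃L[ℂ] Hsp) f)
  have h2 : E ((E⁻¹ : Hsp ≃L[ℂ] Hsp) f) = f := E.apply_symm_apply f
  rw [h2] at h1
  have h3 := ae_comp_mul (inv_ne_zero ha) h1
  filter_upwards [h3] with x hx
  have hax : a * (a⁻¹ * x) = x := by field_simp
  rw [hax] at hx
  rw [hx, inv_mul_cancel_left₀ hc]

lemma gen_rep_int (E : Hsp ≃L[ℂ] Hsp) (c : ℂ) (a : ℝ) (ha : a ≠ 0) (hc : c ≠ 0)
    (h : ∀ f : Hsp, ∀ᵐ x : ℝ, (E f : ℝ → ℂ) x = c * (f : ℝ → ℂ) (a * x)) :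
    ∀ (j : ℤ) (f : Hsp), ∀ᵐ x : ℝ, ((E ^ j) f : ℝ → ℂ) x
      = c ^ j * (f : ℝ → ℂ) (a ^ j * x) := by
  have key : ∀ (n : ℕ) (f : Hsp), ∀ᵐ x : ℝ, ((E ^ (n:ℤ)) f : ℝ → ℂ) x
      = c ^ (n:ℤ) * (f : ℝ → ℂ) (a ^ (n:ℤ) * x) := by
    intro n f
    have := gen_rep_nat E c a ha h n f
    rw [zpow_natCast, zpow_natCast, zpow_natCast]
    exact this
  intro j f
  rcases le_or_gt 0 j with hj | hj
  · obtain ⟨n, rfl⟩ := Int.eq_ofNat_of_zero_le hj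
    exact key n f
  · obtain ⟨n, rfl⟩ : ∃ n : ℕ, j = -(n:ℤ) := by
      refine ⟨j.natAbs, ?_⟩
      omega
    have hEn : ∀ g : Hsp, ∀ᵐ x : ℝ, ((E ^ n) g : ℝ → ℂ) x
        = c ^ n * (g : ℝ → ℂ) (a ^ n * x) := gen_rep_nat E c a ha h n
    have := gen_rep_inv (E ^ n) (c ^ n) (a ^ n) (pow_ne_zero n ha) (pow_ne_zero n hc) hEn f
    have hpow : (E ^ (-(n:ℤ))) = ((E ^ n)⁻¹ : Hsp ≃L[ℂ] Hsp) := by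
      rw [zpow_neg, zpow_natCast]
    rw [hpow]
    filter_upwards [this] with x hx
    rw [hx, zpow_neg, zpow_neg, zpow_natCast, zpow_natCast]

lemma gen_repT_nat (E : Hsp ≃L[ℂ] Hsp)
    (h : ∀ f : Hsp, ∀ᵐ x : ℝ, (E f : ℝ → ℂ) x = (f : ℝ → ℂ) (x - 1)) :
    ∀ (n : ℕ) (f : Hsp), ∀ᵐ x : ℝ, ((E ^ n) f : ℝ → ℂ) x = (f : ℝ → ℂ) (x - n) := by
  intro n
  induction n with
  | zero => intro f; filter_upwards with x; simp; rfl
  | succ n ih =>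
    intro f
    have h1 : (E ^ (n + 1)) f = E ((E ^ n) f) := by rw [pow_succ']; rfl
    have h2 := h ((E ^ n) f)
    have h3 := ae_comp_sub 1 (ih f)
    rw [h1]
    filter_upwards [h2, h3] with x hx hx'
    rw [hx, hx']
    push_cast
    ring_nf

lemma gen_repT_inv (E : Hsp ≃L[ℂ] Hsp) (b : ℝ)
    (h : ∀ f : Hsp, ∀ᵐ x : ℝ, (E f : ℝ → ℂ) x = (f : ℝ → ℂ) (x - b)) :
    ∀ f : Hsp, ∀ᵐ x : ℝ, ((E⁻¹ : Hsp ≃L[ℂ] Hsp) f : ℝ → ℂ) x = (f : ℝ → ℂ) (x + b) := by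
  intro f
  have h1 := h ((E⁻¹ : Hsp ≃L[ℂ] Hsp) f)
  have h2 : E ((E⁻¹ : Hsp ≃L[ℂ] Hsp) f) = f := E.apply_symm_apply f
  rw [h2] at h1
  have h3 := ae_comp_sub (-b) h1
  filter_upwards [h3] with x hx
  rw [show x - -b - b = x by ring] at hx
  rw [← hx]
  ring_nf

lemma gen_repT_int (E : Hsp ≃L[ℂ] Hsp)
    (h : ∀ f : Hsp, ∀ᵐ x : ℝ, (E f : ℝ → ℂ) x = (f : ℝ → ℂ) (x - 1)) :
    ∀ (k : ℤ) (f : Hsp), ∀ᵐ x : ℝ, ((E ^ k) f : ℝ → ℂ) x = (f : ℝ → ℂ) (x - k) := by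
  have hn : ∀ (n : ℕ) (f : Hsp), ∀ᵐ x : ℝ, ((E ^ n) f : ℝ → ℂ) x = (f : ℝ → ℂ) (x - n) :=
    gen_repT_nat E h
  intro k f
  rcases le_or_gt 0 k with hk | hk
  · obtain ⟨n, rfl⟩ := Int.eq_ofNat_of_zero_le hk
    rw [zpow_natCast]
    simpa using hn n f
  · obtain ⟨n, rfl⟩ : ∃ n : ℕ, k = -(n:ℤ) := ⟨k.natAbs, by omega⟩
    have hEn : ∀ g : Hsp, ∀ᵐ x : ℝ, ((E ^ n) g : ℝ → ℂ) x = (g : ℝ → ℂ) (x - n) := hn n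
    have := gen_repT_inv (E ^ n) n hEn f
    have hpow : (E ^ (-(n:ℤ))) = ((E ^ n)⁻¹ : Hsp ≃L[ℂ] Hsp) := by
      rw [zpow_neg, zpow_natCast]
    rw [hpow]
    filter_upwards [this] with x hx
    rw [hx]
    norm_num

/-! ### the modulation kernel -/

/-- The kernel `eC t θ = exp(-2πi t θ)`. -/
def eC (t θ : ℝ) : ℂ := Complex.exp (-2 * (Real.pi : ℂ) * Complex.I * (t : ℂ) * (θ : ℂ))

lemma eC_norm (t θ : ℝ) : ‖eC t θ‖ = 1 := by
  have : (-2 * (Real.pi : ℂ) * Complex.I * (t : ℂ) * (θ : ℂ))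
      = ((-2 * Real.pi * t * θ : ℝ) : ℂ) * Complex.I := by push_cast; ring
  rw [eC, this]
  exact Complex.norm_exp_ofReal_mul_I _

lemma eC_ne_zero (t θ : ℝ) : eC t θ ≠ 0 := Complex.exp_ne_zero _

lemma eC_add (s t θ : ℝ) : eC (s + t) θ = eC s θ * eC t θ := by
  rw [eC, eC, eC, ← Complex.exp_add]
  congr 1
  push_cast
  ring

lemma eC_mul_eC_neg (t θ : ℝ) : eC t θ * eC (-t) θ = 1 := by
  rw [← eC_add]
  simp [eC]

lemma continuous_eC_θ (t : ℝ) : Continuous fun θ : ℝ => eC t θ := by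
  unfold eC; fun_prop

lemma continuous_eC_t (θ : ℝ) : Continuous fun t : ℝ => eC t θ := by
  unfold eC; fun_prop

lemma memℒp_eC_mul (t : ℝ) (f : Hsp) :
    MemLp (fun x : ℝ => eC t x * (f : ℝ → ℂ) x) 2 (volume : Measure ℝ) := by
  constructor
  · exact ((continuous_eC_θ t).aestronglyMeasurable).mul (Lp.aestronglyMeasurable f)
  · have hnorm : ∀ᵐ x : ℝ ∂volume, ‖eC t x * (f : ℝ → ℂ) x‖ = ‖(f : ℝ → ℂ) x‖ := by
      filter_upwards with x
      rw [norm_mul, eC_norm, one_mul]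
    rw [eLpNorm_congr_norm_ae hnorm]
    exact (Lp.memLp f).2

/-- modulation by `exp(-2πi t ·)` as a map on `L²`. -/
def modFn (t : ℝ) (f : Hsp) : Hsp :=
  (memℒp_eC_mul t f).toLp (fun x : ℝ => eC t x * (f : ℝ → ℂ) x)

lemma modFn_coe (t : ℝ) (f : Hsp) :
    (modFn t f : ℝ → ℂ) =ᵐ[volume] fun x => eC t x * (f : ℝ → ℂ) x :=
  MemLp.coeFn_toLp _

lemma modFn_sub (t : ℝ) (f g : Hsp) : modFn t f - modFn t g = modFn t (f - g) := by
  apply Lp.ext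
  have h1 := modFn_coe t f
  have h2 := modFn_coe t g
  have h3 := modFn_coe t (f - g)
  have h4 := Lp.coeFn_sub (modFn t f) (modFn t g)
  have h5 := Lp.coeFn_sub f g
  filter_upwards [h1, h2, h3, h4, h5] with x hx1 hx2 hx3 hx4 hx5
  rw [hx4]
  simp only [Pi.sub_apply]
  rw [hx1, hx2, hx3, hx5]
  simp only [Pi.sub_apply]
  ring

lemma modFn_norm (t : ℝ) (f : Hsp) : ‖modFn t f‖ = ‖f‖ := by
  rw [modFn, Lp.norm_toLp, Lp.norm_def]
  congr 1
  apply eLpNorm_congr_norm_ae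
  filter_upwards with x
  rw [norm_mul, eC_norm, one_mul]

lemma modFn_continuous (t : ℝ) : Continuous (modFn t) := by
  apply Isometry.continuous
  intro f g
  rw [edist_dist, edist_dist, dist_eq_norm, dist_eq_norm, modFn_sub, modFn_norm]

/-! ### density of dyadic rationals -/

lemma dyadic_tendsto (t : ℝ) :
    Filter.Tendsto (fun n : ℕ => ((⌊t * 2 ^ n⌋ : ℝ) / 2 ^ n)) Filter.atTop (nhds t) := by
  have h1 : ∀ n : ℕ, t - (2:ℝ)⁻¹ ^ n ≤ (⌊t * 2 ^ n⌋ : ℝ) / 2 ^ n := by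
    intro n
    have hpos : (0:ℝ) < 2 ^ n := by positivity
    have h2n : (2:ℝ)⁻¹ ^ n * 2 ^ n = 1 := by
      rw [inv_pow, inv_mul_cancel₀ hpos.ne']
    rw [le_div_iff₀ hpos]
    have hfl := Int.sub_one_lt_floor (t * 2 ^ n)
    nlinarith [hfl, h2n]
  have h2 : ∀ n : ℕ, (⌊t * 2 ^ n⌋ : ℝ) / 2 ^ n ≤ t := by
    intro n
    have hpos : (0:ℝ) < 2 ^ n := by positivity
    rw [div_le_iff₀ hpos]
    exact Int.floor_le _
  have hlim : Filter.Tendsto (fun n : ℕ => t - (2:ℝ)⁻¹ ^ n) Filter.atTop (nhds t) := by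
    have : Filter.Tendsto (fun n : ℕ => (2:ℝ)⁻¹ ^ n) Filter.atTop (nhds 0) :=
      tendsto_pow_atTop_nhds_zero_of_lt_one (by norm_num) (by norm_num)
    simpa using Filter.Tendsto.sub tendsto_const_nhds this |>.neg.neg |>.congr (by
      intro n; simp)
  exact tendsto_of_tendsto_of_tendsto_of_le_of_le hlim tendsto_const_nhds
    (fun n => h1 n) (fun n => h2 n)

/-! ### Schwartz function from a smooth compactly supported function -/

def schwartzOfSmoothCompact (g : ℝ → ℝ) (hg : ContDiff ℝ (↑(⊤:ℕ∞)) g) (hsupp : HasCompactSupport g) :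
    SchwartzMap ℝ ℂ where
  toFun := fun x => (g x : ℂ)
  smooth' := Complex.ofRealCLM.contDiff.comp hg
  decay' := by
    intro k n
    set gC : ℝ → ℂ := fun x => (g x : ℂ) with hgC
    have hsmooth : ContDiff ℝ (↑(⊤:ℕ∞)) gC := Complex.ofRealCLM.contDiff.comp hg
    have hsuppC : HasCompactSupport gC := by
      apply hsupp.comp_left (g := fun y : ℝ => (y : ℂ))
      simp
    have hcpt : HasCompactSupport
        (fun x => ‖x‖ ^ k * ‖iteratedFDeriv ℝ n gC x‖) := by
      have h1 : HasCompactSupport (iteratedFDeriv ℝ n gC) := hsuppC.iteratedFDeriv n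
      have h2 : HasCompactSupport (fun x => ‖iteratedFDeriv ℝ n gC x‖) := h1.norm
      exact HasCompactSupport.mul_left h2
    have hcont : Continuous (fun x => ‖x‖ ^ k * ‖iteratedFDeriv ℝ n gC x‖) := by
      refine ((continuous_norm.pow k).mul ?_)
      exact (hsmooth.continuous_iteratedFDeriv (mod_cast le_top)).norm
    obtain ⟨C, hC⟩ := hcont.bounded_above_of_compact_support hcpt
    refine ⟨C, fun x => ?_⟩
    have := hC x
    calc ‖x‖ ^ k * ‖iteratedFDeriv ℝ n gC x‖
        ≤ ‖‖x‖ ^ k * ‖iteratedFDeriv ℝ n gC x‖‖ := le_abs_self _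
      _ ≤ C := this

/-! ### L¹ uniqueness of the Fourier transform -/

lemma L1_fourier_uniqueness (h : ℝ → ℂ) (hint : Integrable h (volume : Measure ℝ))
    (hzero : ∀ t : ℝ, ∫ θ : ℝ, h θ * eC t θ = 0) : h =ᵐ[volume] 0 := by
  apply ae_eq_zero_of_integral_contDiff_smul_eq_zero hint.locallyIntegrable
  intro g hgdiff hgsupp
  -- the complexification of `g` is a Schwartz function
  set gS := schwartzOfSmoothCompact g hgdiff hgsupp with hgS
  set ψ := (SchwartzMap.fourierTransformCLE ℂ (SchwartzMap ℝ ℂ)).symm gS with hψ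
  have hFψ : FourierTransform.fourier (⇑ψ) = ⇑gS := by
    have : (SchwartzMap.fourierTransformCLE ℂ (SchwartzMap ℝ ℂ)) ψ = gS :=
      (SchwartzMap.fourierTransformCLE ℂ (SchwartzMap ℝ ℂ)).apply_symm_apply gS
    rw [← this]
    rfl
  -- rewrite using the multiplication formula
  have hL : Continuous fun p : ℝ × ℝ => (LinearMap.mul ℝ ℝ) p.1 p.2 := by
    simpa using (continuous_mul : Continuous fun p : ℝ × ℝ => p.1 * p.2)
  have hflip : (LinearMap.mul ℝ ℝ).flip = LinearMap.mul ℝ ℝ := by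
    apply LinearMap.ext; intro a; apply LinearMap.ext; intro b
    simp [mul_comm]
  have hmulform : ∀ w : ℝ, FourierTransform.fourier (⇑ψ) w
      = VectorFourier.fourierIntegral Real.fourierChar volume (LinearMap.mul ℝ ℝ) (⇑ψ) w := by
    intro w
    rw [Real.fourier_real_eq]
    rfl
  have key := VectorFourier.integral_bilin_fourierIntegral_eq_flip
    (E := ℂ) (F := ℂ) (μ := (volume : Measure ℝ)) (ν := (volume : Measure ℝ))
    (ContinuousLinearMap.mul ℂ ℂ) Real.continuous_fourierChar hL
    (ψ.integrable (μ := (volume : Measure ℝ))) hint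
  -- `key : ∫ ξ, (𝓕 ψ ξ) * h ξ = ∫ x, ψ x * (𝓕' h x)`
  have hFh : ∀ x : ℝ, VectorFourier.fourierIntegral Real.fourierChar volume
      (LinearMap.mul ℝ ℝ).flip h x = 0 := by
    intro x
    rw [hflip]
    rw [Real.vector_fourierIntegral_eq_integral_exp_smul]
    rw [← hzero x]
    apply MeasureTheory.integral_congr_ae
    filter_upwards with θ
    rw [smul_eq_mul]
    rw [mul_comm]
    congr 1
    rw [eC]
    congr 1
    simp only [LinearMap.mul_apply']
    push_cast
    ring
  have hzero2 : ∫ ξ : ℝ, (VectorFourier.fourierIntegral Real.fourierChar volume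
      (LinearMap.mul ℝ ℝ) (⇑ψ) ξ) * h ξ = 0 := by
    rw [show (∫ ξ : ℝ, (VectorFourier.fourierIntegral Real.fourierChar volume
        (LinearMap.mul ℝ ℝ) (⇑ψ) ξ) * h ξ)
      = ∫ x : ℝ, (ψ x) * (VectorFourier.fourierIntegral Real.fourierChar volume
        (LinearMap.mul ℝ ℝ).flip h x) from key]
    simp only [hFh, mul_zero, integral_zero]
  -- conclude
  have : ∫ x : ℝ, (g x : ℂ) * h x = 0 := by
    rw [← hzero2]
    apply MeasureTheory.integral_congr_ae
    filter_upwards with ξ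
    have : VectorFourier.fourierIntegral Real.fourierChar volume
        (LinearMap.mul ℝ ℝ) (⇑ψ) ξ = (g ξ : ℂ) := by
      rw [← hmulform ξ, hFψ]
      rfl
    rw [this]
  have hfinal : ∫ x : ℝ, g x • h x = 0 := by
    rw [← this]
    apply MeasureTheory.integral_congr_ae
    filter_upwards with x
    rw [Complex.real_smul]
  exact hfinal

/-! ### commutation of the Fourier transform with translation and dilation -/

section Facts

variable (T D : Hsp ≃L[ℂ] Hsp) (F2 : Hsp ≃ₗᵢ[ℂ] Hsp)

variable
  (hT : ∀ f : Hsp, ∀ᵐ x : ℝ, (T f : ℝ → ℂ) x = (f : ℝ → ℂ) (x - 1))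
  (hD : ∀ f : Hsp, ∀ᵐ x : ℝ, (D f : ℝ → ℂ) x = (Real.sqrt 2 : ℂ) * (f : ℝ → ℂ) (2 * x))
  (hF2 : ∀ (g : ℝ → ℂ), Integrable g → ∀ hg2 : MemLp g 2 (volume : Measure ℝ),
      (F2 (hg2.toLp g) : ℝ → ℂ) =ᵐ[volume] fun y : ℝ =>
        ∫ x : ℝ, g x * Complex.exp (-2 * (Real.pi : ℂ) * Complex.I * (x : ℂ) * (y : ℂ)))

include hT hF2 in
lemma fact_T : ∀ f : Hsp, F2 (T f) = modFn 1 (F2 f) := by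
  have hdense : DenseRange (Subtype.val : Lp.simpleFunc ℂ 2 (volume : Measure ℝ) → Hsp) :=
    Lp.simpleFunc.denseRange (by norm_num)
  have hcont1 : Continuous fun f : Hsp => F2 (T f) := F2.continuous.comp T.continuous
  have hcont2 : Continuous fun f : Hsp => modFn 1 (F2 f) :=
    (modFn_continuous 1).comp F2.continuous
  have hcore : ∀ s : Lp.simpleFunc ℂ 2 (volume : Measure ℝ),
      F2 (T (s : Hsp)) = modFn 1 (F2 (s : Hsp)) := by
    intro s
    set s' : Hsp := (s : Hsp) with hs'
    set g₀ := Lp.simpleFunc.toSimpleFunc s with hg₀def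
    have hg₀ : ⇑g₀ =ᵐ[volume] (s' : ℝ → ℂ) := Lp.simpleFunc.toSimpleFunc_eq_toFun s
    have hg₀mem : MemLp (⇑g₀) 2 (volume : Measure ℝ) := Lp.simpleFunc.memLp s
    have hg₀int : Integrable (⇑g₀) (volume : Measure ℝ) :=
      (SimpleFunc.memLp_iff_integrable (by norm_num) (by norm_num)).mp hg₀mem
    -- identify s' with toLp g₀
    have hs'toLp : s' = hg₀mem.toLp ⇑g₀ := by
      apply Lp.ext
      exact (hg₀.symm.trans (MemLp.coeFn_toLp hg₀mem).symm)
    -- the translated simple function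
    set gT : ℝ → ℂ := fun x => g₀ (x - 1) with hgTdef
    have hgTint : Integrable gT (volume : Measure ℝ) := hg₀int.comp_sub_right 1
    have haeT : (T s' : ℝ → ℂ) =ᵐ[volume] gT := by
      have h1 := hT s'
      have h2 := ae_comp_sub 1 hg₀
      filter_upwards [h1, h2] with x hx1 hx2
      rw [hx1, ← hx2]
    have hgTmem : MemLp gT 2 (volume : Measure ℝ) :=
      MemLp.ae_eq haeT (Lp.memLp (T s'))
    have hTs : T s' = hgTmem.toLp gT := by
      apply Lp.ext
      exact haeT.trans (MemLp.coeFn_toLp hgTmem).symm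
    -- both sides have the same a.e. representative
    apply Lp.ext
    have lhs : (F2 (T s') : ℝ → ℂ) =ᵐ[volume] fun y : ℝ =>
        ∫ x : ℝ, gT x * Complex.exp (-2 * (Real.pi : ℂ) * Complex.I * (x : ℂ) * (y : ℂ)) := by
      rw [hTs]; exact hF2 gT hgTint hgTmem
    have rhs0 : (F2 s' : ℝ → ℂ) =ᵐ[volume] fun y : ℝ =>
        ∫ x : ℝ, g₀ x * Complex.exp (-2 * (Real.pi : ℂ) * Complex.I * (x : ℂ) * (y : ℂ)) := by
      rw [hs'toLp]; exact hF2 (⇑g₀) hg₀int hg₀mem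
    have rhs : (modFn 1 (F2 s') : ℝ → ℂ) =ᵐ[volume] fun y : ℝ =>
        eC 1 y * ∫ x : ℝ, g₀ x * Complex.exp (-2 * (Real.pi : ℂ) * Complex.I * (x : ℂ) * (y : ℂ)) := by
      filter_upwards [modFn_coe 1 (F2 s'), rhs0] with y hy1 hy2
      rw [hy1, hy2]
    refine lhs.trans (Filter.EventuallyEq.trans ?_ rhs.symm)
    filter_upwards with y
    -- change of variables x ↦ x - 1
    have hcv : (∫ x : ℝ, gT x * Complex.exp (-2 * (Real.pi : ℂ) * Complex.I * (x : ℂ) * (y : ℂ)))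
        = ∫ u : ℝ, g₀ u * Complex.exp (-2 * (Real.pi : ℂ) * Complex.I * ((u:ℂ) + 1) * (y : ℂ)) := by
      rw [← integral_sub_right_eq_self
        (fun u : ℝ => g₀ u * Complex.exp (-2 * (Real.pi : ℂ) * Complex.I * ((u:ℂ) + 1) * (y : ℂ))) 1]
      apply MeasureTheory.integral_congr_ae
      filter_upwards with x
      have : ((x - 1 : ℝ) : ℂ) + 1 = (x : ℂ) := by push_cast; ring
      rw [hgTdef]
      simp only []
      rw [this]
    rw [hcv]
    have hsplit : ∀ u : ℝ,
        g₀ u * Complex.exp (-2 * (Real.pi : ℂ) * Complex.I * ((u:ℂ) + 1) * (y : ℂ))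
        = eC 1 y * (g₀ u * Complex.exp (-2 * (Real.pi : ℂ) * Complex.I * (u : ℂ) * (y : ℂ))) := by
      intro u
      rw [eC, show (-2 * (Real.pi : ℂ) * Complex.I * ((u:ℂ) + 1) * (y : ℂ))
        = (-2 * (Real.pi : ℂ) * Complex.I * ((1:ℝ):ℂ) * (y:ℂ))
          + (-2 * (Real.pi : ℂ) * Complex.I * (u : ℂ) * (y : ℂ)) by push_cast; ring,
        Complex.exp_add]
      ring
    simp_rw [hsplit]
    rw [MeasureTheory.integral_const_mul]
  have : (fun f : Hsp => F2 (T f)) = fun f : Hsp => modFn 1 (F2 f) := by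
    apply hdense.equalizer hcont1 hcont2
    funext s
    exact hcore s
  intro f
  exact congrFun this f

include hD hF2 in
lemma fact_D : ∀ f : Hsp, F2 (D f) = (D⁻¹ : Hsp ≃L[ℂ] Hsp) (F2 f) := by
  have h2 : ((Real.sqrt 2 : ℝ) : ℂ) ≠ 0 := by
    simp [Real.sqrt_eq_zero']
  have hdense : DenseRange (Subtype.val : Lp.simpleFunc ℂ 2 (volume : Measure ℝ) → Hsp) :=
    Lp.simpleFunc.denseRange (by norm_num)
  have hcont1 : Continuous fun f : Hsp => F2 (D f) := F2.continuous.comp D.continuous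
  have hcont2 : Continuous fun f : Hsp => (D⁻¹ : Hsp ≃L[ℂ] Hsp) (F2 f) :=
    (D⁻¹ : Hsp ≃L[ℂ] Hsp).continuous.comp F2.continuous
  have hcore : ∀ s : Lp.simpleFunc ℂ 2 (volume : Measure ℝ),
      F2 (D (s : Hsp)) = (D⁻¹ : Hsp ≃L[ℂ] Hsp) (F2 (s : Hsp)) := by
    intro s
    set s' : Hsp := (s : Hsp) with hs'
    set g₀ := Lp.simpleFunc.toSimpleFunc s with hg₀def
    have hg₀ : ⇑g₀ =ᵐ[volume] (s' : ℝ → ℂ) := Lp.simpleFunc.toSimpleFunc_eq_toFun s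
    have hg₀mem : MemLp (⇑g₀) 2 (volume : Measure ℝ) := Lp.simpleFunc.memLp s
    have hg₀int : Integrable (⇑g₀) (volume : Measure ℝ) :=
      (SimpleFunc.memLp_iff_integrable (by norm_num) (by norm_num)).mp hg₀mem
    have hs'toLp : s' = hg₀mem.toLp ⇑g₀ := by
      apply Lp.ext
      exact (hg₀.symm.trans (MemLp.coeFn_toLp hg₀mem).symm)
    set gD : ℝ → ℂ := fun x => (Real.sqrt 2 : ℂ) * g₀ (2 * x) with hgDdef
    have hgDint : Integrable gD (volume : Measure ℝ) :=
      (hg₀int.comp_mul_left' (two_ne_zero)).const_mul _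
    have haeD : (D s' : ℝ → ℂ) =ᵐ[volume] gD := by
      have h1 := hD s'
      have h2 := ae_comp_mul (two_ne_zero) hg₀
      filter_upwards [h1, h2] with x hx1 hx2
      rw [hx1, ← hx2]
    have hgDmem : MemLp gD 2 (volume : Measure ℝ) :=
      MemLp.ae_eq haeD (Lp.memLp (D s'))
    have hDs : D s' = hgDmem.toLp gD := by
      apply Lp.ext
      exact haeD.trans (MemLp.coeFn_toLp hgDmem).symm
    apply Lp.ext
    have lhs : (F2 (D s') : ℝ → ℂ) =ᵐ[volume] fun y : ℝ =>
        ∫ x : ℝ, gD x * Complex.exp (-2 * (Real.pi : ℂ) * Complex.I * (x : ℂ) * (y : ℂ)) := by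
      rw [hDs]; exact hF2 gD hgDint hgDmem
    have rhs0 := hF2 (⇑g₀) hg₀int hg₀mem
    rw [← hs'toLp] at rhs0
    -- rep of D⁻¹ (F2 s')
    have hrepinv := gen_rep_inv D (Real.sqrt 2 : ℂ) 2 two_ne_zero h2 hD (F2 s')
    have rhs1 := ae_comp_mul (inv_ne_zero (two_ne_zero (α := ℝ))) rhs0
    set mid : ℝ → ℂ := fun y => (Real.sqrt 2 : ℂ)⁻¹ *
        ∫ x : ℝ, g₀ x * Complex.exp (-2 * (Real.pi : ℂ) * Complex.I * (x : ℂ) * ((2⁻¹ * y : ℝ) : ℂ))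
      with hmid
    have hsq2 : ((Real.sqrt 2 : ℝ) : ℂ) * ((Real.sqrt 2 : ℝ) : ℂ) = 2 := by
      rw [← Complex.ofReal_mul, Real.mul_self_sqrt (by norm_num)]
      norm_num
    have hhalf : ((2:ℂ))⁻¹ * ((Real.sqrt 2 : ℝ) : ℂ) = ((Real.sqrt 2 : ℝ) : ℂ)⁻¹ := by
      apply eq_inv_of_mul_eq_one_left
      rw [mul_assoc, hsq2]
      norm_num
    have step1 : (F2 (D s') : ℝ → ℂ) =ᵐ[volume] mid := by
      refine lhs.trans ?_
      filter_upwards with y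
      have hcv : (∫ x : ℝ, gD x * Complex.exp (-2 * (Real.pi : ℂ) * Complex.I * (x : ℂ) * (y : ℂ)))
          = ∫ x : ℝ, (fun u : ℝ => (Real.sqrt 2 : ℂ) *
              (g₀ u * Complex.exp (-2 * (Real.pi : ℂ) * Complex.I * (u : ℂ) * ((2⁻¹ * y : ℝ) : ℂ))))
            (2 * x) := by
        apply MeasureTheory.integral_congr_ae
        filter_upwards with x
        simp only [hgDdef]
        rw [mul_assoc]
        congr 2
        congr 1
        push_cast
        ring
      rw [hcv, MeasureTheory.Measure.integral_comp_mul_left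
        (fun u : ℝ => (Real.sqrt 2 : ℂ) *
          (g₀ u * Complex.exp (-2 * (Real.pi : ℂ) * Complex.I * (u : ℂ) * ((2⁻¹ * y : ℝ) : ℂ)))) 2]
      rw [MeasureTheory.integral_const_mul, Complex.real_smul, hmid]
      rw [show ((|2⁻¹| : ℝ) : ℂ) = (2:ℂ)⁻¹ by rw [show |(2:ℝ)⁻¹| = (2:ℝ)⁻¹ from abs_of_pos (by norm_num)]; norm_num]
      rw [← mul_assoc, hhalf]
    have step2 : ((D⁻¹ : Hsp ≃L[ℂ] Hsp) (F2 s') : ℝ → ℂ) =ᵐ[volume] mid := by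
      filter_upwards [hrepinv, rhs1] with y hy1 hy2
      rw [hy1, hy2, hmid]
    exact step1.trans step2.symm
  have : (fun f : Hsp => F2 (D f)) = fun f : Hsp => (D⁻¹ : Hsp ≃L[ℂ] Hsp) (F2 f) := by
    apply hdense.equalizer hcont1 hcont2
    funext s
    exact hcore s
  intro f
  exact congrFun this f

end Facts

lemma sqrt2C_ne : ((Real.sqrt 2 : ℝ) : ℂ) ≠ 0 := by
  simp [Real.sqrt_eq_zero']

lemma eC_zero (θ : ℝ) : eC 0 θ = 1 := by simp [eC]

lemma eC_scale (t a θ : ℝ) : eC t (a * θ) = eC (t * a) θ := by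
  rw [eC, eC]; congr 1; push_cast; ring

section Facts2

variable (T D : Hsp ≃L[ℂ] Hsp) (F2 : Hsp ≃ₗᵢ[ℂ] Hsp)

variable
  (hT : ∀ f : Hsp, ∀ᵐ x : ℝ, (T f : ℝ → ℂ) x = (f : ℝ → ℂ) (x - 1))
  (hD : ∀ f : Hsp, ∀ᵐ x : ℝ, (D f : ℝ → ℂ) x = (Real.sqrt 2 : ℂ) * (f : ℝ → ℂ) (2 * x))
  (hF2 : ∀ (g : ℝ → ℂ), Integrable g → ∀ hg2 : MemLp g 2 (volume : Measure ℝ),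
      (F2 (hg2.toLp g) : ℝ → ℂ) =ᵐ[volume] fun y : ℝ =>
        ∫ x : ℝ, g x * Complex.exp (-2 * (Real.pi : ℂ) * Complex.I * (x : ℂ) * (y : ℂ)))

include hD hF2 in
lemma fact_Dinv : ∀ f : Hsp, F2 ((D⁻¹ : Hsp ≃L[ℂ] Hsp) f) = D (F2 f) := by
  intro f
  have h1 := fact_D (D := D) (F2 := F2) hD hF2 ((D⁻¹ : Hsp ≃L[ℂ] Hsp) f)
  have h2 : D ((D⁻¹ : Hsp ≃L[ℂ] Hsp) f) = f := D.apply_symm_apply f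
  rw [h2] at h1
  have h3 := congrArg D h1
  have h4 : D ((D⁻¹ : Hsp ≃L[ℂ] Hsp) (F2 ((D⁻¹ : Hsp ≃L[ℂ] Hsp) f)))
      = F2 ((D⁻¹ : Hsp ≃L[ℂ] Hsp) f) := D.apply_symm_apply _
  rw [h4] at h3
  exact h3.symm

include hD hF2 in
lemma fact_D_int : ∀ (j : ℤ) (f : Hsp), F2 ((D ^ j) f) = (D ^ (-j)) (F2 f) := by
  intro j
  induction j using Int.induction_on with
  | zero =>
    intro f
    rw [zpow_zero, neg_zero, zpow_zero]
    rfl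
  | succ i hi =>
    intro f
    have e1 : (D ^ ((i:ℤ) + 1)) f = (D ^ (i:ℤ)) (D f) := by rw [zpow_add_one]; rfl
    rw [e1, hi (D f), fact_D (D := D) (F2 := F2) hD hF2 f]
    have e2 : (D ^ (-((i:ℤ) + 1))) (F2 f)
        = (D ^ (-(i:ℤ))) ((D⁻¹ : Hsp ≃L[ℂ] Hsp) (F2 f)) := by
      rw [show (-((i:ℤ) + 1)) = -(i:ℤ) - 1 by ring, zpow_sub_one]
      rfl
    rw [e2]
  | pred i hi =>
    intro f
    have e1 : (D ^ (-(i:ℤ) - 1)) f = (D ^ (-(i:ℤ))) ((D⁻¹ : Hsp ≃L[ℂ] Hsp) f) := by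
      rw [zpow_sub_one]; rfl
    rw [e1, hi ((D⁻¹ : Hsp ≃L[ℂ] Hsp) f), fact_Dinv (D := D) (F2 := F2) hD hF2 f]
    have e2 : (D ^ (-(-(i:ℤ) - 1))) (F2 f) = (D ^ (i:ℤ)) (D (F2 f)) := by
      rw [show (-(-(i:ℤ) - 1)) = (i:ℤ) + 1 by ring, zpow_add_one]
      rfl
    rw [e2, neg_neg]

include hT hF2 in
lemma fact_T_rep : ∀ (k : ℤ) (f : Hsp), (F2 ((T ^ k) f) : ℝ → ℂ) =ᵐ[volume]
    fun y : ℝ => eC (k : ℝ) y * (F2 f : ℝ → ℂ) y := by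
  intro k
  induction k using Int.induction_on with
  | zero =>
    intro f
    rw [zpow_zero]
    filter_upwards with y
    rw [show (((0:ℤ)):ℝ) = 0 by norm_num, eC_zero, one_mul]
    rfl
  | succ i hi =>
    intro f
    have e1 : (T ^ ((i:ℤ) + 1)) f = (T ^ (i:ℤ)) (T f) := by rw [zpow_add_one]; rfl
    rw [e1]
    have h1 := hi (T f)
    have h2 : F2 (T f) = modFn 1 (F2 f) := fact_T (T := T) (F2 := F2) hT hF2 f
    rw [h2] at h1
    have h3 := modFn_coe 1 (F2 f)
    filter_upwards [h1, h3] with y hy1 hy3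
    rw [hy1, hy3, show (((i:ℤ) + 1 : ℤ) : ℝ) = (i:ℝ) + 1 by push_cast; ring, eC_add]
    push_cast
    ring
  | pred i hi =>
    intro f
    have e1 : (T ^ (-(i:ℤ) - 1)) f = (T ^ (-(i:ℤ))) ((T⁻¹ : Hsp ≃L[ℂ] Hsp) f) := by
      rw [zpow_sub_one]; rfl
    rw [e1]
    have h1 := hi ((T⁻¹ : Hsp ≃L[ℂ] Hsp) f)
    have hrep : (F2 ((T⁻¹ : Hsp ≃L[ℂ] Hsp) f) : ℝ → ℂ) =ᵐ[volume]
        fun y : ℝ => eC (-1) y * (F2 f : ℝ → ℂ) y := by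
      have h2 : F2 (T ((T⁻¹ : Hsp ≃L[ℂ] Hsp) f)) = modFn 1 (F2 ((T⁻¹ : Hsp ≃L[ℂ] Hsp) f)) :=
        fact_T (T := T) (F2 := F2) hT hF2 _
      have h4 : T ((T⁻¹ : Hsp ≃L[ℂ] Hsp) f) = f := T.apply_symm_apply f
      rw [h4] at h2
      have h5 := modFn_coe 1 (F2 ((T⁻¹ : Hsp ≃L[ℂ] Hsp) f))
      rw [← h2] at h5
      -- h5 : coeFn (F2 f) =ᵐ fun y => eC 1 y * coeFn (F2 (T⁻¹ f)) y
      filter_upwards [h5] with y hy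
      rw [hy, ← mul_assoc, mul_comm (eC (-1) y) (eC 1 y), eC_mul_eC_neg, one_mul]
    filter_upwards [h1, hrep] with y hy1 hy2
    rw [hy1, hy2, show ((-(i:ℤ) - 1 : ℤ) : ℝ) = (-(i:ℝ)) + (-1) by push_cast; ring, eC_add]
    push_cast
    ring

include hT hD hF2 in
lemma rep_u (φ : Hsp) (j' k m : ℤ) :
    (F2 ((D ^ j') ((T ^ k) ((D ^ m) φ))) : ℝ → ℂ) =ᵐ[volume]
      fun θ : ℝ => ((Real.sqrt 2 : ℝ) : ℂ) ^ (-(j' + m)) * eC ((k : ℝ) * (2:ℝ) ^ (-j')) θ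
        * (F2 φ : ℝ → ℂ) ((2:ℝ) ^ (-(j' + m)) * θ) := by
  have e1 : F2 ((D ^ j') ((T ^ k) ((D ^ m) φ)))
      = (D ^ (-j')) (F2 ((T ^ k) ((D ^ m) φ))) :=
    fact_D_int (D := D) (F2 := F2) hD hF2 j' _
  rw [e1]
  have h1 := gen_rep_int D ((Real.sqrt 2 : ℝ) : ℂ) 2 two_ne_zero sqrt2C_ne hD (-j')
    (F2 ((T ^ k) ((D ^ m) φ)))
  have h2 := fact_T_rep (T := T) (F2 := F2) hT hF2 k ((D ^ m) φ)
  have e3 : F2 ((D ^ m) φ) = (D ^ (-m)) (F2 φ) :=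
    fact_D_int (D := D) (F2 := F2) hD hF2 m φ
  rw [e3] at h2
  have h2' := ae_comp_mul (zpow_ne_zero (-j') (two_ne_zero (α := ℝ))) h2
  have h3 := gen_rep_int D ((Real.sqrt 2 : ℝ) : ℂ) 2 two_ne_zero sqrt2C_ne hD (-m) (F2 φ)
  have h3' := ae_comp_mul (zpow_ne_zero (-j') (two_ne_zero (α := ℝ))) h3
  filter_upwards [h1, h2', h3'] with θ hh1 hh2 hh3
  rw [hh1, hh2, hh3]
  rw [eC_scale]
  rw [show (2:ℝ) ^ (-m) * ((2:ℝ) ^ (-j') * θ) = (2:ℝ) ^ (-(j'+m)) * θ by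
    rw [show (-(j'+m)) = -m + -j' by ring, zpow_add₀ (two_ne_zero (α := ℝ))]; ring]
  rw [show ((Real.sqrt 2 : ℝ) : ℂ) ^ (-(j'+m))
      = ((Real.sqrt 2 : ℝ) : ℂ) ^ (-j') * ((Real.sqrt 2 : ℝ) : ℂ) ^ (-m) by
    rw [show (-(j'+m)) = -j' + -m by ring, zpow_add₀ sqrt2C_ne]]
  ring

end Facts2

/-! ### conjugation identities and invariance of the subspaces -/

section Memb

variable (T D : Hsp ≃L[ℂ] Hsp) (φ : Hsp)

variable
  (hT : ∀ f : Hsp, ∀ᵐ x : ℝ, (T f : ℝ → ℂ) x = (f : ℝ → ℂ) (x - 1))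
  (hD : ∀ f : Hsp, ∀ᵐ x : ℝ, (D f : ℝ → ℂ) x = (Real.sqrt 2 : ℂ) * (f : ℝ → ℂ) (2 * x))

include hT hD in
lemma conj_DTD : (D⁻¹ : Hsp ≃L[ℂ] Hsp) * T * D = T ^ (2:ℤ) := by
  apply ContinuousLinearEquiv.ext
  funext f
  apply Lp.ext
  have hinv := gen_rep_inv D ((Real.sqrt 2 : ℝ) : ℂ) 2 two_ne_zero sqrt2C_ne hD (T (D f))
  have hTr := ae_comp_mul (inv_ne_zero (two_ne_zero (α := ℝ))) (hT (D f))
  have hDr := ae_comp_mul (inv_ne_zero (two_ne_zero (α := ℝ))) (ae_comp_sub 1 (hD f))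
  have hT2 := gen_repT_int T hT 2 f
  have happ : ((D⁻¹ : Hsp ≃L[ℂ] Hsp) * T * D) f = (D⁻¹ : Hsp ≃L[ℂ] Hsp) (T (D f)) := rfl
  rw [happ]
  filter_upwards [hinv, hTr, hDr, hT2] with x hx1 hx2 hx3 hx4
  rw [hx1, hx2, hx3, hx4]
  rw [show (2 : ℝ) * (2⁻¹ * x - 1) = x - 2 by ring, ← mul_assoc,
    inv_mul_cancel₀ sqrt2C_ne, one_mul]
  norm_num

include hT hD in
lemma conj_k (k : ℤ) : (D⁻¹ : Hsp ≃L[ℂ] Hsp) * T ^ k * D = T ^ (2 * k) := by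
  have hmap := map_zpow (MulAut.conj (D⁻¹ : Hsp ≃L[ℂ] Hsp)) T k
  have h1 : (MulAut.conj (D⁻¹ : Hsp ≃L[ℂ] Hsp)) (T ^ k)
      = (D⁻¹ : Hsp ≃L[ℂ] Hsp) * T ^ k * D := by
    rw [MulAut.conj_apply, inv_inv]
  have h2 : (MulAut.conj (D⁻¹ : Hsp ≃L[ℂ] Hsp)) T = (D⁻¹ : Hsp ≃L[ℂ] Hsp) * T * D := by
    rw [MulAut.conj_apply, inv_inv]
  rw [h1, h2, conj_DTD T D hT hD] at hmap
  rw [hmap, ← zpow_mul]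

include hT hD in
lemma conj_pow (n : ℕ) (k : ℤ) :
    D ^ (-(n:ℤ)) * T ^ k * D ^ (n:ℤ) = T ^ (k * 2 ^ n) := by
  induction n generalizing k with
  | zero => simp
  | succ n ih =>
    have e : D ^ (-((n+1:ℕ):ℤ)) * T ^ k * D ^ (((n+1:ℕ)):ℤ)
        = D ^ (-(n:ℤ)) * ((D⁻¹ : Hsp ≃L[ℂ] Hsp) * T ^ k * D) * D ^ (n:ℤ) := by
      push_cast
      group
    rw [e, conj_k T D hT hD k]
    have e2 : D ^ (-(n:ℤ)) * T ^ (2 * k) * D ^ (n:ℤ) = T ^ ((2 * k) * 2 ^ n) := ih (2 * k)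
    rw [e2]
    congr 1
    ring

include hT hD in
lemma TDn (n : ℕ) (k : ℤ) :
    T ^ k * D ^ (n:ℤ) = D ^ (n:ℤ) * T ^ (k * 2 ^ n) := by
  rw [← conj_pow T D hT hD n k]
  group

/-! ### the subspaces -/

/-- the closed subspace `V₀` generated by the integer translates of `φ`. -/
def Vsub : Submodule ℂ Hsp :=
  (Submodule.span ℂ (Set.range fun k : ℤ => (T ^ k) φ)).topologicalClosure

/-- the closed subspace generated by all the `V_j`. -/
def Wsub : Submodule ℂ Hsp :=
  (⨆ j : ℤ,
      Submodule.map
        (((D ^ j : Hsp ≃L[ℂ] Hsp) : Hsp →L[ℂ] Hsp) : Hsp →ₗ[ℂ] Hsp)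
        (Vsub T φ)).topologicalClosure

lemma mapsto_closure {L : Hsp →L[ℂ] Hsp} {A B : Submodule ℂ Hsp}
    (hB : IsClosed (B : Set Hsp)) (h : ∀ a ∈ A, L a ∈ B) :
    ∀ x ∈ A.topologicalClosure, L x ∈ B := by
  intro x hx
  have hx' : x ∈ closure (A : Set Hsp) := by
    have : x ∈ (A.topologicalClosure : Set Hsp) := hx
    rwa [Submodule.topologicalClosure_coe] at this
  have := map_mem_closure L.continuous hx' (fun y hy => h y hy)
  rwa [hB.closure_eq] at this

lemma phi_mem_V : φ ∈ Vsub T φ := by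
  apply Submodule.le_topologicalClosure
  apply Submodule.subset_span
  refine ⟨0, ?_⟩
  show (T ^ (0:ℤ)) φ = φ
  rw [zpow_zero]
  rfl

lemma Tk_V (k : ℤ) : ∀ v ∈ Vsub T φ, (T ^ k) v ∈ Vsub T φ := by
  apply mapsto_closure (L := ((T ^ k : Hsp ≃L[ℂ] Hsp) : Hsp →L[ℂ] Hsp))
    (Submodule.isClosed_topologicalClosure _)
  intro a ha
  have hmap : Submodule.map (((T ^ k : Hsp ≃L[ℂ] Hsp) : Hsp →L[ℂ] Hsp) : Hsp →ₗ[ℂ] Hsp)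
      (Submodule.span ℂ (Set.range fun m : ℤ => (T ^ m) φ)) ≤ Vsub T φ := by
    rw [Submodule.map_span]
    apply Submodule.span_le.mpr
    rintro _ ⟨_, ⟨m, rfl⟩, rfl⟩
    apply Submodule.le_topologicalClosure
    apply Submodule.subset_span
    refine ⟨k + m, ?_⟩
    show (T ^ (k + m)) φ = (T ^ k : Hsp ≃L[ℂ] Hsp) ((T ^ m) φ)
    rw [zpow_add]
    rfl
  exact hmap ⟨a, ha, rfl⟩

variable (href : (D⁻¹ : Hsp ≃L[ℂ] Hsp) φ ∈ Vsub T φ)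

include hT hD href in
lemma Dinv_V : ∀ v ∈ Vsub T φ, (D⁻¹ : Hsp ≃L[ℂ] Hsp) v ∈ Vsub T φ := by
  apply mapsto_closure (L := ((D⁻¹ : Hsp ≃L[ℂ] Hsp) : Hsp →L[ℂ] Hsp))
    (Submodule.isClosed_topologicalClosure _)
  intro a ha
  have hmap : Submodule.map (((D⁻¹ : Hsp ≃L[ℂ] Hsp) : Hsp →L[ℂ] Hsp) : Hsp →ₗ[ℂ] Hsp)
      (Submodule.span ℂ (Set.range fun m : ℤ => (T ^ m) φ)) ≤ Vsub T φ := by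
    rw [Submodule.map_span]
    apply Submodule.span_le.mpr
    rintro _ ⟨_, ⟨m, rfl⟩, rfl⟩
    show (D⁻¹ : Hsp ≃L[ℂ] Hsp) ((T ^ m) φ) ∈ Vsub T φ
    have hcomm : (D⁻¹ : Hsp ≃L[ℂ] Hsp) ((T ^ m) φ)
        = (T ^ (2 * m)) ((D⁻¹ : Hsp ≃L[ℂ] Hsp) φ) := by
      have h := conj_k T D hT hD m
      have h2 := congrArg (fun g : Hsp ≃L[ℂ] Hsp => g * (D⁻¹ : Hsp ≃L[ℂ] Hsp)) h
      have h3 : (D⁻¹ : Hsp ≃L[ℂ] Hsp) * T ^ m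
          = T ^ (2 * m) * (D⁻¹ : Hsp ≃L[ℂ] Hsp) := by
        calc (D⁻¹ : Hsp ≃L[ℂ] Hsp) * T ^ m
            = ((D⁻¹ : Hsp ≃L[ℂ] Hsp) * T ^ m * D) * (D⁻¹ : Hsp ≃L[ℂ] Hsp) := by group
          _ = T ^ (2 * m) * (D⁻¹ : Hsp ≃L[ℂ] Hsp) := by rw [conj_k T D hT hD m]
      calc (D⁻¹ : Hsp ≃L[ℂ] Hsp) ((T ^ m) φ)
          = ((D⁻¹ : Hsp ≃L[ℂ] Hsp) * T ^ m) φ := rfl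
        _ = (T ^ (2 * m) * (D⁻¹ : Hsp ≃L[ℂ] Hsp)) φ := by rw [h3]
        _ = (T ^ (2 * m)) ((D⁻¹ : Hsp ≃L[ℂ] Hsp) φ) := rfl
    rw [hcomm]
    exact Tk_V T φ (2 * m) _ href
  exact hmap ⟨a, ha, rfl⟩

include hT hD href in
lemma Dneg_V : ∀ (n : ℕ), ∀ v ∈ Vsub T φ, (D ^ (-(n:ℤ))) v ∈ Vsub T φ := by
  intro n
  induction n with
  | zero =>
    intro v hv
    have h0 : (D ^ (-(0:ℕ):ℤ)) v = v := by
      rw [show (-(0:ℕ):ℤ) = 0 by norm_num, zpow_zero]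
      rfl
    rwa [h0]
  | succ n ih =>
    intro v hv
    have h1 : (D ^ (-((n+1:ℕ)):ℤ)) v
        = (D ^ (-(n:ℤ))) ((D⁻¹ : Hsp ≃L[ℂ] Hsp) v) := by
      have : (D ^ (-((n+1:ℕ)):ℤ)) = (D ^ (-(n:ℤ))) * (D⁻¹ : Hsp ≃L[ℂ] Hsp) := by
        push_cast
        group
      rw [this]
      rfl
    rw [h1]
    exact ih _ (Dinv_V T D φ hT hD href v hv)

lemma mem_W_of_V (j : ℤ) {v : Hsp} (hv : v ∈ Vsub T φ) : (D ^ j) v ∈ Wsub T D φ := by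
  apply Submodule.le_topologicalClosure
  apply Submodule.mem_iSup_of_mem j
  exact ⟨v, hv, rfl⟩

lemma V_le_W : ∀ v ∈ Vsub T φ, v ∈ Wsub T D φ := by
  intro v hv
  have h := mem_W_of_V T D φ 0 hv
  have h0 : (D ^ (0:ℤ)) v = v := by rw [zpow_zero]; rfl
  rwa [h0] at h

lemma D_W (m : ℤ) : ∀ w ∈ Wsub T D φ, (D ^ m) w ∈ Wsub T D φ := by
  apply mapsto_closure (L := ((D ^ m : Hsp ≃L[ℂ] Hsp) : Hsp →L[ℂ] Hsp))
    (Submodule.isClosed_topologicalClosure _)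
  intro a ha
  refine Submodule.iSup_induction _
    (motive := fun y => (D ^ m : Hsp ≃L[ℂ] Hsp) y ∈ Wsub T D φ) ha ?_ ?_ ?_
  · intro j x hx
    obtain ⟨v, hv, rfl⟩ := hx
    show (D ^ m : Hsp ≃L[ℂ] Hsp) ((D ^ j : Hsp ≃L[ℂ] Hsp) v) ∈ Wsub T D φ
    have : (D ^ m : Hsp ≃L[ℂ] Hsp) ((D ^ j) v) = (D ^ (m + j)) v := by
      rw [zpow_add]
      rfl
    rw [this]
    exact mem_W_of_V T D φ (m + j) hv
  · show (D ^ m : Hsp ≃L[ℂ] Hsp) (0 : Hsp) ∈ Wsub T D φ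
    rw [map_zero]
    exact Submodule.zero_mem _
  · intro x y hx' hy'
    show (D ^ m : Hsp ≃L[ℂ] Hsp) (x + y) ∈ Wsub T D φ
    rw [map_add]
    exact Submodule.add_mem _ hx' hy'

include hT hD href in
lemma T_W (k : ℤ) : ∀ w ∈ Wsub T D φ, (T ^ k) w ∈ Wsub T D φ := by
  apply mapsto_closure (L := ((T ^ k : Hsp ≃L[ℂ] Hsp) : Hsp →L[ℂ] Hsp))
    (Submodule.isClosed_topologicalClosure _)
  intro a ha
  refine Submodule.iSup_induction _
    (motive := fun y => (T ^ k : Hsp ≃L[ℂ] Hsp) y ∈ Wsub T D φ) ha ?_ ?_ ?_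
  · intro j x hx
    obtain ⟨v, hv, rfl⟩ := hx
    show (T ^ k : Hsp ≃L[ℂ] Hsp) ((D ^ j : Hsp ≃L[ℂ] Hsp) v) ∈ Wsub T D φ
    rcases le_or_gt 0 j with hj | hj
    · obtain ⟨n, rfl⟩ := Int.eq_ofNat_of_zero_le hj
      have : (T ^ k : Hsp ≃L[ℂ] Hsp) ((D ^ (n:ℤ)) v)
          = (D ^ (n:ℤ)) ((T ^ (k * 2 ^ n)) v) := by
        calc (T ^ k : Hsp ≃L[ℂ] Hsp) ((D ^ (n:ℤ)) v)
            = (T ^ k * D ^ (n:ℤ)) v := rfl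
          _ = (D ^ (n:ℤ) * T ^ (k * 2 ^ n)) v := by rw [TDn T D hT hD n k]
          _ = (D ^ (n:ℤ)) ((T ^ (k * 2 ^ n)) v) := rfl
      rw [this]
      exact mem_W_of_V T D φ (n:ℤ) (Tk_V T φ _ v hv)
    · obtain ⟨n, rfl⟩ : ∃ n : ℕ, j = -(n:ℤ) := ⟨j.natAbs, by omega⟩
      have h1 : (D ^ (-(n:ℤ))) v ∈ Vsub T φ := Dneg_V T D φ hT hD href n v hv
      have h2 : (T ^ k) ((D ^ (-(n:ℤ))) v) ∈ Vsub T φ := Tk_V T φ k _ h1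
      exact V_le_W T D φ _ h2
  · show (T ^ k : Hsp ≃L[ℂ] Hsp) (0 : Hsp) ∈ Wsub T D φ
    rw [map_zero]
    exact Submodule.zero_mem _
  · intro x y hx' hy'
    show (T ^ k : Hsp ≃L[ℂ] Hsp) (x + y) ∈ Wsub T D φ
    rw [map_add]
    exact Submodule.add_mem _ hx' hy'

include hT hD href in
lemma u_mem (j' k m : ℤ) : (D ^ j') ((T ^ k) ((D ^ m) φ)) ∈ Wsub T D φ :=
  D_W T D φ j' _ (T_W T D φ hT hD href k _ (mem_W_of_V T D φ m (phi_mem_V T φ)))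

end Memb

/-! ### the main theorem -/

section Main

variable (T D : Hsp ≃L[ℂ] Hsp) (F2 : Hsp ≃ₗᵢ[ℂ] Hsp) (φ : Hsp)

variable
  (hT : ∀ f : Hsp, ∀ᵐ x : ℝ, (T f : ℝ → ℂ) x = (f : ℝ → ℂ) (x - 1))
  (hD : ∀ f : Hsp, ∀ᵐ x : ℝ, (D f : ℝ → ℂ) x = (Real.sqrt 2 : ℂ) * (f : ℝ → ℂ) (2 * x))
  (hF2 : ∀ (g : ℝ → ℂ), Integrable g → ∀ hg2 : MemLp g 2 (volume : Measure ℝ),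
      (F2 (hg2.toLp g) : ℝ → ℂ) =ᵐ[volume] fun y : ℝ =>
        ∫ x : ℝ, g x * Complex.exp (-2 * (Real.pi : ℂ) * Complex.I * (x : ℂ) * (y : ℂ)))

include hT hD hF2 in
lemma inner_gen (g : Hsp) (j' k m : ℤ) :
    (inner ℂ g ((D ^ j') ((T ^ k) ((D ^ m) φ))) : ℂ)
      = ∫ θ : ℝ, (starRingEnd ℂ) ((F2 g : ℝ → ℂ) θ) *
          (((Real.sqrt 2 : ℝ) : ℂ) ^ (-(j' + m)) * eC ((k : ℝ) * (2:ℝ) ^ (-j')) θ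
            * (F2 φ : ℝ → ℂ) ((2:ℝ) ^ (-(j' + m)) * θ)) := by
  rw [← F2.inner_map_map g ((D ^ j') ((T ^ k) ((D ^ m) φ))), L2.inner_def]
  apply MeasureTheory.integral_congr_ae
  filter_upwards [rep_u (T := T) (D := D) (F2 := F2) hT hD hF2 φ j' k m] with θ hθ
  rw [RCLike.inner_apply', hθ]

include hT hD hF2 in
theorem main_iff
    (href : (D⁻¹ : Hsp ≃L[ℂ] Hsp) φ ∈ Vsub T φ) :
    Wsub T D φ = ⊤ ↔
      ∀ᵐ θ : ℝ, ∃ j : ℤ, (F2 φ : ℝ → ℂ) ((2 : ℝ) ^ (-j) * θ) ≠ 0 := by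
  classical
  constructor
  · -- forward direction
    intro htop
    by_contra hcon
    rw [MeasureTheory.ae_iff] at hcon
    have hN : ∀ θ ∈ {θ : ℝ | ¬ ∃ j : ℤ, (F2 φ : ℝ → ℂ) ((2:ℝ) ^ (-j) * θ) ≠ 0},
        ∀ j : ℤ, (F2 φ : ℝ → ℂ) ((2:ℝ) ^ (-j) * θ) = 0 := by
      intro θ hθ j
      by_contra hne
      exact hθ ⟨j, hne⟩
    have hmeasN : MeasurableSet {θ : ℝ | ¬ ∃ j : ℤ, (F2 φ : ℝ → ℂ) ((2:ℝ) ^ (-j) * θ) ≠ 0} := by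
      have hNeq : {θ : ℝ | ¬ ∃ j : ℤ, (F2 φ : ℝ → ℂ) ((2:ℝ) ^ (-j) * θ) ≠ 0}
          = ⋂ j : ℤ, (fun θ : ℝ => (F2 φ : ℝ → ℂ) ((2:ℝ) ^ (-j) * θ)) ⁻¹' {0} := by
        ext θ
        simp only [Set.mem_setOf_eq, not_exists, not_not, Set.mem_iInter,
          Set.mem_preimage, Set.mem_singleton_iff]
      rw [hNeq]
      refine MeasurableSet.iInter fun j => ?_
      exact ((Lp.stronglyMeasurable (F2 φ)).measurable.comp
        (measurable_const_mul ((2:ℝ) ^ (-j)))) (measurableSet_singleton 0)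
    have hNpos : 0 < volume {θ : ℝ | ¬ ∃ j : ℤ, (F2 φ : ℝ → ℂ) ((2:ℝ) ^ (-j) * θ) ≠ 0} :=
      pos_iff_ne_zero.mpr hcon
    obtain ⟨S, hSmeas, hSsub, hSpos, hSfin⟩ :=
      Measure.exists_subset_measure_lt_top hmeasN hNpos
    have hgmem : MemLp (S.indicator (fun _ => (1:ℂ))) 2 (volume : Measure ℝ) :=
      memLp_indicator_const 2 hSmeas 1 (Or.inr hSfin.ne)
    set f : Hsp := F2.symm (hgmem.toLp (S.indicator (fun _ => (1:ℂ)))) with hfdef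
    have hF2f : F2 f = hgmem.toLp (S.indicator (fun _ => (1:ℂ))) := F2.apply_symm_apply _
    -- inner products with the generators vanish
    have hgen : ∀ j k : ℤ, (inner ℂ f ((D ^ j : Hsp ≃L[ℂ] Hsp) ((T ^ k) φ)) : ℂ) = 0 := by
      intro j k
      have hD0 : (D ^ (0:ℤ)) φ = φ := by rw [zpow_zero]; rfl
      rw [← hD0]
      rw [inner_gen (T := T) (D := D) (F2 := F2) φ hT hD hF2 f j k 0]
      have hcoe : (F2 f : ℝ → ℂ) =ᵐ[volume] S.indicator (fun _ => (1:ℂ)) := by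
        rw [hF2f]
        exact MemLp.coeFn_toLp hgmem
      calc (∫ θ : ℝ, (starRingEnd ℂ) ((F2 f : ℝ → ℂ) θ) *
            (((Real.sqrt 2 : ℝ) : ℂ) ^ (-(j + 0)) * eC ((k : ℝ) * (2:ℝ) ^ (-j)) θ
              * (F2 φ : ℝ → ℂ) ((2:ℝ) ^ (-(j + 0)) * θ)))
          = ∫ _ : ℝ, (0 : ℂ) := by
            apply MeasureTheory.integral_congr_ae
            filter_upwards [hcoe] with θ hθ
            rw [hθ]
            by_cases hθS : θ ∈ S
            · have h0 : (F2 φ : ℝ → ℂ) ((2:ℝ) ^ (-(j + 0)) * θ) = 0 := by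
                rw [add_zero]
                exact hN θ (hSsub hθS) j
              rw [h0]
              ring
            · have h0 : S.indicator (fun _ => (1:ℂ)) θ = 0 :=
                Set.indicator_of_notMem hθS _
              rw [h0]
              simp
        _ = 0 := integral_zero _ _
    -- f is orthogonal to W
    have hK_closed : IsClosed ((LinearMap.ker ((innerSL ℂ f : Hsp →L[ℂ] ℂ) : Hsp →ₗ[ℂ] ℂ)) : Set Hsp) :=
      ContinuousLinearMap.isClosed_ker (innerSL ℂ f)
    have hWK : Wsub T D φ ≤ LinearMap.ker ((innerSL ℂ f : Hsp →L[ℂ] ℂ) : Hsp →ₗ[ℂ] ℂ) := by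
      apply Submodule.topologicalClosure_minimal _ ?_ hK_closed
      apply iSup_le
      intro j
      rw [Submodule.map_le_iff_le_comap]
      apply Submodule.topologicalClosure_minimal
      · apply Submodule.span_le.mpr
        rintro _ ⟨k, rfl⟩
        show (T ^ k) φ ∈ Submodule.comap (((D ^ j : Hsp ≃L[ℂ] Hsp) : Hsp →L[ℂ] Hsp) : Hsp →ₗ[ℂ] Hsp)
          (LinearMap.ker ((innerSL ℂ f : Hsp →L[ℂ] ℂ) : Hsp →ₗ[ℂ] ℂ))
        rw [Submodule.mem_comap, LinearMap.mem_ker]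
        show (inner ℂ f (((D ^ j : Hsp ≃L[ℂ] Hsp) : Hsp →L[ℂ] Hsp) ((T ^ k) φ)) : ℂ) = 0
        rw [ContinuousLinearEquiv.coe_coe]
        exact hgen j k
      · exact IsClosed.preimage (ContinuousLinearMap.continuous _) hK_closed
    have hfW : f ∈ (Wsub T D φ)ᗮ := by
      rw [Submodule.mem_orthogonal]
      intro u hu
      have h1 : (inner ℂ f u : ℂ) = 0 := by
        have := hWK hu
        rw [LinearMap.mem_ker] at this
        rw [← this]
        simp [innerSL_apply_apply]
      exact inner_eq_zero_symm.mpr h1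
    rw [htop, Submodule.top_orthogonal_eq_bot] at hfW
    have hf0 : f = 0 := (Submodule.mem_bot ℂ).mp hfW
    have hLp0 : hgmem.toLp (S.indicator (fun _ => (1:ℂ))) = 0 := by
      rw [← hF2f, hf0, map_zero]
    have hg0 : S.indicator (fun _ : ℝ => (1:ℂ)) =ᵐ[volume] 0 := by
      have h1 := MemLp.coeFn_toLp hgmem
      rw [hLp0] at h1
      exact ((Lp.coeFn_zero ℂ 2 volume).symm.trans h1).symm
    have hS0 : volume (S ∩ Function.support (fun _ : ℝ => (1:ℂ))) = 0 :=
      Set.indicator_ae_eq_zero.mp hg0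
    rw [Function.support_const one_ne_zero, Set.inter_univ] at hS0
    exact absurd hS0 hSpos.ne'
  · -- backward direction
    intro hae
    haveI : CompleteSpace (Wsub T D φ) :=
      (Submodule.isClosed_topologicalClosure _).completeSpace_coe
    rw [← Submodule.orthogonal_eq_bot_iff, Submodule.eq_bot_iff]
    intro f hf
    have hf' := (Submodule.mem_orthogonal _ f).mp hf
    -- for each scale j, the product of the Fourier transforms vanishes a.e.
    have key : ∀ j : ℤ, (fun θ : ℝ => (starRingEnd ℂ) ((F2 f : ℝ → ℂ) θ) *
        (F2 φ : ℝ → ℂ) ((2:ℝ) ^ (-j) * θ)) =ᵐ[volume] 0 := by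
      intro j
      -- integrability
      have hrepξ := gen_rep_int D ((Real.sqrt 2 : ℝ) : ℂ) 2 two_ne_zero sqrt2C_ne hD (-j) (F2 φ)
      have hint : Integrable (fun θ : ℝ => (starRingEnd ℂ) ((F2 f : ℝ → ℂ) θ) *
          (F2 φ : ℝ → ℂ) ((2:ℝ) ^ (-j) * θ)) (volume : Measure ℝ) := by
        have h0 := L2.integrable_inner (𝕜 := ℂ) (F2 f) ((D ^ (-j)) (F2 φ))
        have h1 := h0.const_mul (((Real.sqrt 2 : ℝ) : ℂ) ^ j)
        apply h1.congr
        filter_upwards [hrepξ] with θ hθ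
        rw [RCLike.inner_apply', hθ]
        have hc : ((Real.sqrt 2 : ℝ) : ℂ) ^ j * ((Real.sqrt 2 : ℝ) : ℂ) ^ (-j) = 1 := by
          rw [← zpow_add₀ sqrt2C_ne]
          simp
        calc ((Real.sqrt 2 : ℝ) : ℂ) ^ j * ((starRingEnd ℂ) ((F2 f : ℝ → ℂ) θ) *
              (((Real.sqrt 2 : ℝ) : ℂ) ^ (-j) * (F2 φ : ℝ → ℂ) ((2:ℝ) ^ (-j) * θ)))
            = (((Real.sqrt 2 : ℝ) : ℂ) ^ j * ((Real.sqrt 2 : ℝ) : ℂ) ^ (-j)) *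
              ((starRingEnd ℂ) ((F2 f : ℝ → ℂ) θ) *
                (F2 φ : ℝ → ℂ) ((2:ℝ) ^ (-j) * θ)) := by ring
          _ = (starRingEnd ℂ) ((F2 f : ℝ → ℂ) θ) *
                (F2 φ : ℝ → ℂ) ((2:ℝ) ^ (-j) * θ) := by rw [hc, one_mul]
      -- continuity of the Fourier transform of this L¹ function
      have hc_cont : Continuous (fun t : ℝ =>
          ∫ θ : ℝ, ((starRingEnd ℂ) ((F2 f : ℝ → ℂ) θ) *
            (F2 φ : ℝ → ℂ) ((2:ℝ) ^ (-j) * θ)) * eC t θ) := by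
        apply continuous_of_dominated (bound := fun θ : ℝ =>
          ‖(starRingEnd ℂ) ((F2 f : ℝ → ℂ) θ) * (F2 φ : ℝ → ℂ) ((2:ℝ) ^ (-j) * θ)‖)
        · intro t
          exact hint.aestronglyMeasurable.mul ((continuous_eC_θ t).aestronglyMeasurable)
        · intro t
          filter_upwards with θ
          rw [norm_mul, eC_norm, mul_one]
        · exact hint.norm
        · filter_upwards with θ
          exact continuous_const.mul (continuous_eC_t θ)
      -- vanishing at dyadic points
      have hc_dyadic : ∀ (k : ℤ) (n : ℕ),
          (∫ θ : ℝ, ((starRingEnd ℂ) ((F2 f : ℝ → ℂ) θ) *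
            (F2 φ : ℝ → ℂ) ((2:ℝ) ^ (-j) * θ)) * eC ((k : ℝ) * (2:ℝ) ^ (-(n:ℤ))) θ) = 0 := by
        intro k n
        have humem := u_mem T D φ hT hD href (n:ℤ) k (j - n)
        have horth : (inner ℂ ((D ^ (n:ℤ)) ((T ^ k) ((D ^ (j - (n:ℤ))) φ))) f : ℂ) = 0 :=
          hf' _ humem
        have horth' : (inner ℂ f ((D ^ (n:ℤ)) ((T ^ k) ((D ^ (j - (n:ℤ))) φ))) : ℂ) = 0 :=
          inner_eq_zero_symm.mp horth
        rw [inner_gen (T := T) (D := D) (F2 := F2) φ hT hD hF2 f (n:ℤ) k (j - (n:ℤ))] at horth'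
        rw [show ((n:ℤ) + (j - (n:ℤ))) = j by ring] at horth'
        have hpull : (∫ θ : ℝ, (starRingEnd ℂ) ((F2 f : ℝ → ℂ) θ) *
              (((Real.sqrt 2 : ℝ) : ℂ) ^ (-j) * eC ((k : ℝ) * (2:ℝ) ^ (-(n:ℤ))) θ
                * (F2 φ : ℝ → ℂ) ((2:ℝ) ^ (-j) * θ)))
            = ((Real.sqrt 2 : ℝ) : ℂ) ^ (-j) *
              ∫ θ : ℝ, ((starRingEnd ℂ) ((F2 f : ℝ → ℂ) θ) *
                (F2 φ : ℝ → ℂ) ((2:ℝ) ^ (-j) * θ)) * eC ((k : ℝ) * (2:ℝ) ^ (-(n:ℤ))) θ := by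
          rw [← MeasureTheory.integral_const_mul]
          apply MeasureTheory.integral_congr_ae
          filter_upwards with θ
          ring
        rw [hpull] at horth'
        rcases mul_eq_zero.mp horth' with h | h
        · exact absurd h (zpow_ne_zero _ sqrt2C_ne)
        · exact h
      -- hence vanishing everywhere
      have hc_zero : ∀ t : ℝ,
          (∫ θ : ℝ, ((starRingEnd ℂ) ((F2 f : ℝ → ℂ) θ) *
            (F2 φ : ℝ → ℂ) ((2:ℝ) ^ (-j) * θ)) * eC t θ) = 0 := by
        intro t
        have hseq := dyadic_tendsto t
        have htend := (hc_cont.tendsto t).comp hseq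
        have hz : ∀ n : ℕ,
            (∫ θ : ℝ, ((starRingEnd ℂ) ((F2 f : ℝ → ℂ) θ) *
              (F2 φ : ℝ → ℂ) ((2:ℝ) ^ (-j) * θ)) * eC ((⌊t * 2 ^ n⌋ : ℝ) / 2 ^ n) θ) = 0 := by
          intro n
          have := hc_dyadic ⌊t * 2 ^ n⌋ n
          rw [show ((⌊t * 2 ^ n⌋ : ℝ) / 2 ^ n) = (⌊t * 2 ^ n⌋ : ℝ) * (2:ℝ) ^ (-(n:ℤ)) by
            rw [div_eq_mul_inv, zpow_neg, zpow_natCast]]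
          exact this
        have htend0 : Filter.Tendsto (fun _ : ℕ => (0:ℂ)) Filter.atTop
            (nhds (∫ θ : ℝ, ((starRingEnd ℂ) ((F2 f : ℝ → ℂ) θ) *
              (F2 φ : ℝ → ℂ) ((2:ℝ) ^ (-j) * θ)) * eC t θ)) := by
          refine htend.congr fun n => ?_
          exact (hz n).symm ▸ rfl
        exact (tendsto_nhds_unique htend0 tendsto_const_nhds).symm ▸ rfl
      exact L1_fourier_uniqueness _ hint hc_zero
    -- combine over all j
    have hall : ∀ᵐ θ : ℝ, ∀ j : ℤ, (starRingEnd ℂ) ((F2 f : ℝ → ℂ) θ) *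
        (F2 φ : ℝ → ℂ) ((2:ℝ) ^ (-j) * θ) = 0 := by
      rw [MeasureTheory.ae_all_iff]
      intro j
      exact (key j).mono fun θ h => h
    have hzero : (F2 f : ℝ → ℂ) =ᵐ[volume] 0 := by
      filter_upwards [hall, hae] with θ h1 h2
      obtain ⟨j, hj⟩ := h2
      rcases mul_eq_zero.mp (h1 j) with h | h
      · simpa using star_eq_zero.mp h
      · exact absurd h hj
    have hF2f0 : F2 f = 0 := by
      apply Lp.ext
      exact hzero.trans (Lp.coeFn_zero ℂ 2 volume).symm
    apply F2.injective
    rw [hF2f0, map_zero]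

end Main


end Aux17

/-- Let `φ ∈ L²(ℝ)` be refinable and `V_j = D^j V₀`.  Then the closure of `⋃_j V_j` is all
of `L²(ℝ)` if and only if `⋃_{j∈ℤ} 2^j · supp(φ̂) = ℝ` up to a null set, i.e. for a.e. `θ`
there is `j ∈ ℤ` with `φ̂(2^{-j}θ) ≠ 0`.  `F2` is the Fourier–Plancherel transform. -/
theorem stmt17
    (T D : Lp ℂ 2 (volume : Measure ℝ) ≃L[ℂ] Lp ℂ 2 (volume : Measure ℝ))
    (hT : ∀ f : Lp ℂ 2 (volume : Measure ℝ),
      ∀ᵐ x : ℝ, (T f : ℝ → ℂ) x = (f : ℝ → ℂ) (x - 1))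
    (hD : ∀ f : Lp ℂ 2 (volume : Measure ℝ),
      ∀ᵐ x : ℝ, (D f : ℝ → ℂ) x = (Real.sqrt 2 : ℂ) * (f : ℝ → ℂ) (2 * x))
    (F2 : Lp ℂ 2 (volume : Measure ℝ) ≃ₗᵢ[ℂ] Lp ℂ 2 (volume : Measure ℝ))
    (hF2 : ∀ (g : ℝ → ℂ), Integrable g → ∀ hg2 : MemLp g 2 (volume : Measure ℝ),
      (F2 (hg2.toLp g) : ℝ → ℂ) =ᵐ[volume] fun y : ℝ =>
        ∫ x : ℝ, g x * Complex.exp (-2 * (Real.pi : ℂ) * Complex.I * (x : ℂ) * (y : ℂ)))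
    (φ : Lp ℂ 2 (volume : Measure ℝ))
    (href : D⁻¹ φ ∈
      (Submodule.span ℂ (Set.range fun k : ℤ => (T ^ k) φ)).topologicalClosure) :
    (⨆ j : ℤ,
        Submodule.map
          (((D ^ j : Lp ℂ 2 (volume : Measure ℝ) ≃L[ℂ] Lp ℂ 2 (volume : Measure ℝ)) :
            Lp ℂ 2 (volume : Measure ℝ) →L[ℂ] Lp ℂ 2 (volume : Measure ℝ)) :
            Lp ℂ 2 (volume : Measure ℝ) →ₗ[ℂ] Lp ℂ 2 (volume : Measure ℝ))
          (Submodule.span ℂ (Set.range fun k : ℤ => (T ^ k) φ)).topologicalClosure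
        ).topologicalClosure = ⊤ ↔
      ∀ᵐ θ : ℝ, ∃ j : ℤ, (F2 φ : ℝ → ℂ) ((2 : ℝ) ^ (-j) * θ) ≠ 0 := by
  exact Aux17.main_iff T D F2 φ hT hD hF2 href

end Aux17sec
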